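/- Let σ > 0 and Δ ∈ ℝ with τ = Δ/σ. The 4×4 complex matrix Λ = iσ·I + M, where M has entries M₁₄ = M₄₁ = -iσ, M₂₂ = Δ, M₂₃ = M₃₂ = -iσ, M₃₃ = -Δ, and all other entries zero (in the ordered basis e₁,e₂,e₃,e₄), has spectrum {0, 2iσ, iσ + σ√(τ²-1), iσ - σ√(τ²-1)}, where √ denotes the principal branch of the square root. -/

import Mathlib

open Complex Matrix

/-- Principal branch of the complex square root (branch cut on the negative real axis). -/
noncomputable def csqrt (z : ℂ) : ℂ := z ^ ((1 : ℂ) / 2)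

/-- The level shift operator `Λ = iσ·1 + M` of the spin-fermion model in the
overlapping resonance regime. -/
noncomputable def levelShift (σ Δ : ℝ) : Matrix (Fin 4) (Fin 4) ℂ :=
  (Complex.I * (σ : ℂ)) • (1 : Matrix (Fin 4) (Fin 4) ℂ) +
  !![0, 0, 0, -(Complex.I * (σ : ℂ));
     0, (Δ : ℂ), -(Complex.I * (σ : ℂ)), 0;
     0, -(Complex.I * (σ : ℂ)), -(Δ : ℂ), 0;
     -(Complex.I * (σ : ℂ)), 0, 0, 0]

lemma csqrt_sq (z : ℂ) : csqrt z ^ 2 = z := by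
  have h := Complex.cpow_nat_inv_pow z (two_ne_zero)
  set_option linter.unnecessarySimpa false in
  simpa [csqrt, one_div] using h

theorem spectrum_levelShift (σ Δ : ℝ) (hσ : 0 < σ) :
    spectrum ℂ (levelShift σ Δ) =
      {0, 2 * Complex.I * (σ : ℂ),
       Complex.I * (σ : ℂ) + (σ : ℂ) * csqrt (((Δ / σ : ℝ) : ℂ) ^ 2 - 1),
       Complex.I * (σ : ℂ) - (σ : ℂ) * csqrt (((Δ / σ : ℝ) : ℂ) ^ 2 - 1)} := by
  have hσ' : (σ : ℂ) ≠ 0 := by exact_mod_cast hσ.ne'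
  set s : ℂ := (σ : ℂ) * csqrt (((Δ / σ : ℝ) : ℂ) ^ 2 - 1) with hs
  have hs2 : s ^ 2 = (Δ : ℂ) ^ 2 - (σ : ℂ) ^ 2 := by
    rw [hs, mul_pow, csqrt_sq]
    push_cast
    field_simp
  ext x
  rw [spectrum.mem_iff, Matrix.isUnit_iff_isUnit_det, isUnit_iff_ne_zero, not_not]
  have hM : ((algebraMap ℂ (Matrix (Fin 4) (Fin 4) ℂ)) x) - levelShift σ Δ =
      !![x - Complex.I * σ, 0, 0, Complex.I * σ;
         0, x - Complex.I * σ - Δ, Complex.I * σ, 0;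
         0, Complex.I * σ, x - Complex.I * σ + Δ, 0;
         Complex.I * σ, 0, 0, x - Complex.I * σ] := by
    unfold levelShift
    ext i j
    fin_cases i <;> fin_cases j <;>
      simp [Matrix.algebraMap_matrix_apply, Matrix.one_apply, Matrix.vecHead, Matrix.vecTail] <;> ring
  have hdet : (((algebraMap ℂ (Matrix (Fin 4) (Fin 4) ℂ)) x) - levelShift σ Δ).det =
      x * (x - 2 * Complex.I * σ) *
        ((x - (Complex.I * σ + s)) * (x - (Complex.I * σ - s))) := by
    rw [hM, Matrix.det_succ_row_zero]
    simp [Fin.sum_univ_succ, Matrix.det_fin_three, Matrix.vecHead, Matrix.vecTail,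
      show (Fin.castSucc 2 : Fin 4) = 2 from rfl, show (Fin.succAbove 3 2 : Fin 4) = 2 from rfl]
    have : (x - (Complex.I * σ + s)) * (x - (Complex.I * σ - s)) =
        (x - Complex.I * σ) ^ 2 - s ^ 2 := by ring
    rw [this, hs2]
    linear_combination (2 * x * Complex.I * (σ:ℂ)^3 - x^2 * (σ:ℂ)^2) * Complex.I_sq
  rw [hdet]
  simp only [Set.mem_insert_iff, Set.mem_singleton_iff, mul_eq_zero, sub_eq_zero]
  tauto
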